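/- A Harnack inequality yields a square-integrable density for a Markov kernel (argument in the proof of Theorem 2.3(2)): Let (E, d) be a metric space with its Borel σ-algebra, let κ be a Markov kernel from E to E, and let μ be a probability measure on E that is invariant for κ, i.e. ∫_E κ(x)(B) dμ(x) = μ(B) for every Borel set B. Suppose there is a constant c > 0 such that the Harnack inequality (∫_E f dκ(η))² ≤ (∫_E f² dκ(ξ)) · e^{c·d(ξ,η)²} holds for all bounded measurable f : E → [0,∞) and all ξ, η ∈ E. Then for every ξ ∈ E the measure κ(ξ) is absolutely continuous with respect to μ, and its Radon–Nikodym density h_ξ := dκ(ξ)/dμ satisfies ∫_E h_ξ² dμ ≤ (∫_E e^{−c·d(ξ,η)²} dμ(η))^{-1}, where the integral ∫_E e^{−c·d(ξ,η)²} dμ(η) is strictly positive. -/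

import Mathlib

open MeasureTheory ProbabilityTheory
open scoped ENNReal

/-- **A Harnack inequality yields a square-integrable density for a Markov kernel**
(argument in the proof of Theorem 2.3(2) of the paper). If a Markov kernel `κ` with
invariant probability measure `μ` satisfies the Harnack inequality
`(∫ f dκ(η))² ≤ (∫ f² dκ(ξ)) e^{c d(ξ,η)²}`, then each `κ(ξ)` is absolutely
continuous with respect to `μ` with density `h_ξ` satisfying
`∫ h_ξ² dμ ≤ (∫ e^{-c d(ξ,·)²} dμ)⁻¹`, the latter integral being positive. -/
theorem harnack_implies_square_integrable_density
    {E : Type*} [MetricSpace E] [MeasurableSpace E] [BorelSpace E]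
    (κ : Kernel E E) [IsMarkovKernel κ]
    (μ : Measure E) [IsProbabilityMeasure μ]
    (hinv : ∀ B : Set E, MeasurableSet B → ∫⁻ x, κ x B ∂μ = μ B)
    (c : ℝ) (hc : 0 < c)
    (harnack : ∀ f : E → ℝ, Measurable f → (∀ x, 0 ≤ f x) → (∃ M : ℝ, ∀ x, f x ≤ M) →
      ∀ ξ η : E,
        (∫ x, f x ∂(κ η)) ^ 2 ≤
          (∫ x, f x ^ 2 ∂(κ ξ)) * Real.exp (c * dist ξ η ^ 2)) :
    ∀ ξ : E,
      κ ξ ≪ μ ∧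
      0 < ∫⁻ η, ENNReal.ofReal (Real.exp (-(c * dist ξ η ^ 2))) ∂μ ∧
      ∫⁻ η, ((κ ξ).rnDeriv μ η) ^ 2 ∂μ ≤
        (∫⁻ η, ENNReal.ofReal (Real.exp (-(c * dist ξ η ^ 2))) ∂μ)⁻¹ := by
  intro ξ
  -- the invariance of `μ` as a `bind` identity
  have hbind : μ.bind ⇑κ = μ := by
    ext B hB
    rw [Measure.bind_apply hB (Kernel.measurable κ).aemeasurable, hinv B hB]
  have hinvL : ∀ g : E → ℝ≥0∞, Measurable g →
      ∫⁻ η, ∫⁻ x, g x ∂(κ η) ∂μ = ∫⁻ x, g x ∂μ := by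
    intro g hg
    rw [← Measure.lintegral_bind (Kernel.measurable κ).aemeasurable hg.aemeasurable, hbind]
  -- measurability of the exponential weight
  have hexpmeas : Measurable fun η : E =>
      ENNReal.ofReal (Real.exp (-(c * dist ξ η ^ 2))) := by
    apply Measurable.ennreal_ofReal
    exact (Real.continuous_exp.comp
      (((continuous_const.mul ((continuous_const.dist continuous_id).pow 2)).neg))).measurable
  set I := ∫⁻ η, ENNReal.ofReal (Real.exp (-(c * dist ξ η ^ 2))) ∂μ with hIdef
  -- positivity of `I`
  have hIpos : 0 < I := by
    rw [hIdef, lintegral_pos_iff_support hexpmeas]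
    have hsupp : (Function.support fun η : E =>
        ENNReal.ofReal (Real.exp (-(c * dist ξ η ^ 2)))) = Set.univ := by
      ext η
      simp [Function.mem_support, ENNReal.ofReal_eq_zero, not_le, Real.exp_pos]
    rw [hsupp]
    simp
  -- absolute continuity
  have hac : κ ξ ≪ μ := by
    refine Measure.AbsolutelyContinuous.mk (fun B hB hB0 => ?_)
    have h0 : ∫⁻ x, κ x B ∂μ = 0 := by rw [hinv B hB, hB0]
    have hae : ∀ᵐ η ∂μ, κ η B = 0 :=
      (lintegral_eq_zero_iff (Kernel.measurable_coe κ hB)).mp h0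
    have hne : (ae μ).NeBot := ae_neBot.mpr (IsProbabilityMeasure.ne_zero μ)
    obtain ⟨η, hη⟩ := hae.exists
    have hfnn : ∀ x, 0 ≤ B.indicator (1 : E → ℝ) x :=
      fun x => Set.indicator_nonneg (fun _ _ => zero_le_one) x
    have hfbd : ∀ x, B.indicator (1 : E → ℝ) x ≤ 1 := by
      intro x; by_cases h : x ∈ B <;> simp [Set.indicator, h]
    have hsq : ∀ x, B.indicator (1 : E → ℝ) x ^ 2 = B.indicator (1 : E → ℝ) x := by
      intro x; by_cases h : x ∈ B <;> simp [Set.indicator, h]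
    have h1 := harnack (B.indicator 1) (measurable_one.indicator hB) hfnn ⟨1, hfbd⟩ η ξ
    simp only [hsq] at h1
    rw [integral_indicator_one hB, integral_indicator_one hB, Measure.real, Measure.real, hη] at h1
    simp only [ENNReal.toReal_zero, zero_mul] at h1
    have h2 : ((κ ξ) B).toReal = 0 :=
      le_antisymm (by nlinarith [sq_nonneg ((κ ξ) B).toReal]) ENNReal.toReal_nonneg
    exact (ENNReal.toReal_eq_zero_iff _).mp h2 |>.resolve_right (measure_ne_top _ _)
  -- the density
  set h : E → ℝ≥0∞ := (κ ξ).rnDeriv μ with hhdef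
  have hmeas : Measurable h := Measure.measurable_rnDeriv _ _
  have hwd : μ.withDensity h = κ ξ := Measure.withDensity_rnDeriv_eq _ _ hac
  -- key truncated bound
  have key : ∀ n : ℕ, ∫⁻ x, (min (h x) n) ^ 2 ∂μ ≤ I⁻¹ := by
    intro n
    set g : E → ℝ≥0∞ := fun x => min (h x) n with hgdef
    have hgmeas : Measurable g := hmeas.min measurable_const
    have hgtop : ∀ x, g x ≠ ⊤ :=
      fun x => ne_top_of_le_ne_top (ENNReal.natCast_ne_top n) (min_le_right _ _)
    set f : E → ℝ := fun x => (g x).toReal with hfdef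
    have hfmeas : Measurable f := hgmeas.ennreal_toReal
    have hfnn : ∀ x, 0 ≤ f x := fun x => ENNReal.toReal_nonneg
    have hfbd : ∀ x, f x ≤ n := by
      intro x
      have := ENNReal.toReal_mono (ENNReal.natCast_ne_top n) (min_le_right (h x) n)
      simpa using this
    have hofReal : ∀ x, ENNReal.ofReal (f x) = g x :=
      fun x => ENNReal.ofReal_toReal (hgtop x)
    have hofReal2 : ∀ x, ENNReal.ofReal (f x ^ 2) = g x ^ 2 := by
      intro x
      rw [ENNReal.ofReal_pow (hfnn x), hofReal x]
    have hint : ∀ ν : Measure E, IsProbabilityMeasure ν → Integrable f ν := by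
      intro ν hν
      refine (integrable_const (n : ℝ)).mono' hfmeas.aestronglyMeasurable ?_
      exact ae_of_all _ (fun x => by rw [Real.norm_of_nonneg (hfnn x)]; exact hfbd x)
    have hint2 : ∀ ν : Measure E, IsProbabilityMeasure ν → Integrable (fun x => f x ^ 2) ν := by
      intro ν hν
      refine (integrable_const ((n : ℝ) ^ 2)).mono' (hfmeas.pow_const 2).aestronglyMeasurable ?_
      refine ae_of_all _ (fun x => ?_)
      rw [Real.norm_of_nonneg (sq_nonneg _)]
      exact pow_le_pow_left₀ (hfnn x) (hfbd x) 2
    set K : ℝ := ∫ x, f x ∂(κ ξ) with hKdef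
    have hKnn : 0 ≤ K := integral_nonneg hfnn
    have hK : ENNReal.ofReal K = ∫⁻ x, g x ∂(κ ξ) := by
      rw [hKdef, ofReal_integral_eq_lintegral_ofReal (hint _ inferInstance) (ae_of_all _ hfnn)]
      simp only [hofReal]
    -- lower bound : ∫ g² dμ ≤ ∫ g dκ ξ
    have hlow : ∫⁻ x, g x ^ 2 ∂μ ≤ ∫⁻ x, g x ∂(κ ξ) := by
      rw [← hwd, lintegral_withDensity_eq_lintegral_mul _ hmeas hgmeas]
      refine lintegral_mono (fun x => ?_)
      simp only [Pi.mul_apply, pow_two]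
      exact mul_le_mul_left (min_le_left _ _) _
    -- pointwise Harnack consequence
    have hpt : ∀ η, ENNReal.ofReal K ^ 2 * ENNReal.ofReal (Real.exp (-(c * dist ξ η ^ 2))) ≤
        ∫⁻ x, g x ^ 2 ∂(κ η) := by
      intro η
      have h1 := harnack f hfmeas hfnn ⟨n, hfbd⟩ η ξ
      have hepos : 0 < Real.exp (c * dist η ξ ^ 2) := Real.exp_pos _
      have h2 : K ^ 2 * Real.exp (-(c * dist ξ η ^ 2)) ≤ ∫ x, f x ^ 2 ∂(κ η) := by
        rw [Real.exp_neg, dist_comm ξ η]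
        have h1' := (div_le_iff₀ hepos).mpr h1
        calc K ^ 2 * (Real.exp (c * dist η ξ ^ 2))⁻¹
            = K ^ 2 / Real.exp (c * dist η ξ ^ 2) := by ring
          _ ≤ ∫ x, f x ^ 2 ∂(κ η) := h1'
      calc ENNReal.ofReal K ^ 2 * ENNReal.ofReal (Real.exp (-(c * dist ξ η ^ 2)))
          = ENNReal.ofReal (K ^ 2 * Real.exp (-(c * dist ξ η ^ 2))) := by
            rw [ENNReal.ofReal_mul (sq_nonneg K), ENNReal.ofReal_pow hKnn]
        _ ≤ ENNReal.ofReal (∫ x, f x ^ 2 ∂(κ η)) := ENNReal.ofReal_le_ofReal h2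
        _ = ∫⁻ x, ENNReal.ofReal (f x ^ 2) ∂(κ η) := by
            rw [ofReal_integral_eq_lintegral_ofReal (hint2 _ inferInstance)
              (ae_of_all _ (fun x => sq_nonneg _))]
        _ = ∫⁻ x, g x ^ 2 ∂(κ η) := by simp only [hofReal2]
    -- integrate over η
    have h3 : ENNReal.ofReal K ^ 2 * I ≤ ∫⁻ x, g x ^ 2 ∂μ := by
      calc ENNReal.ofReal K ^ 2 * I
          = ∫⁻ η, ENNReal.ofReal K ^ 2 *
              ENNReal.ofReal (Real.exp (-(c * dist ξ η ^ 2))) ∂μ := by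
            rw [hIdef, lintegral_const_mul _ hexpmeas]
        _ ≤ ∫⁻ η, ∫⁻ x, g x ^ 2 ∂(κ η) ∂μ := lintegral_mono hpt
        _ = ∫⁻ x, g x ^ 2 ∂μ := hinvL _ (hgmeas.pow_const 2)
    set A : ℝ≥0∞ := ∫⁻ x, g x ^ 2 ∂μ with hAdef
    have hA2 : A ≤ ENNReal.ofReal K := hK ▸ hlow
    have hAtop : A ≠ ⊤ := by
      have : A ≤ ((n : ℝ≥0∞)) ^ 2 * μ Set.univ := by
        rw [← lintegral_const]
        exact lintegral_mono (fun x => pow_le_pow_left' (min_le_right _ _) 2)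
      simp only [measure_univ, mul_one] at this
      exact ne_top_of_le_ne_top (by simp [ENNReal.pow_ne_top, ENNReal.natCast_ne_top]) this
    rcases eq_or_ne A 0 with h0 | h0
    · rw [h0]; exact zero_le
    · rw [ENNReal.le_inv_iff_mul_le]
      have h4 : A ^ 2 * I ≤ A := le_trans
        (mul_le_mul_left (pow_le_pow_left' hA2 2) I) h3
      have h5 : (A * I) * A ≤ 1 * A := by
        rw [one_mul]
        calc (A * I) * A = A ^ 2 * I := by ring
          _ ≤ A := h4
      exact (ENNReal.mul_le_mul_iff_left h0 hAtop).mp h5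
  -- monotone convergence
  have hmono : Monotone fun (n : ℕ) (x : E) => (min (h x) n) ^ 2 := by
    intro n m hnm
    intro x
    exact pow_le_pow_left' (min_le_min le_rfl (Nat.cast_le.mpr hnm)) 2
  have hsup : ∀ x, (⨆ n : ℕ, (min (h x) n) ^ 2) = h x ^ 2 := by
    intro x
    refine le_antisymm (iSup_le fun n => pow_le_pow_left' (min_le_left _ _) 2) ?_
    rcases eq_or_ne (h x) ⊤ with htop | htop
    · rw [htop]
      calc (⊤ : ℝ≥0∞) ^ 2 = ⊤ := by simp
        _ = ⨆ n : ℕ, (n : ℝ≥0∞) := ENNReal.iSup_natCast.symm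
        _ ≤ ⨆ n : ℕ, (n : ℝ≥0∞) ^ 2 := iSup_mono (fun n => by
              calc ((n : ℝ≥0∞)) = ((n : ℕ) : ℝ≥0∞) := by norm_cast
                _ ≤ ((n ^ 2 : ℕ) : ℝ≥0∞) := Nat.cast_le.mpr (Nat.le_self_pow two_ne_zero n)
                _ = (n : ℝ≥0∞) ^ 2 := by push_cast; ring)
        _ = ⨆ n : ℕ, (min (⊤ : ℝ≥0∞) (n : ℝ≥0∞)) ^ 2 := by
              simp_rw [min_eq_right (le_top : (_ : ℝ≥0∞) ≤ ⊤)]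
    · obtain ⟨n, hn⟩ := ENNReal.exists_nat_gt htop
      refine le_trans (le_of_eq ?_) (le_iSup _ n)
      rw [min_eq_left hn.le]
  refine ⟨hac, hIpos, ?_⟩
  calc ∫⁻ x, h x ^ 2 ∂μ = ∫⁻ x, ⨆ n : ℕ, (min (h x) n) ^ 2 ∂μ := by
        simp_rw [hsup]
    _ = ⨆ n : ℕ, ∫⁻ x, (min (h x) n) ^ 2 ∂μ :=
        lintegral_iSup (fun n => (hmeas.min measurable_const).pow_const 2) hmono
    _ ≤ I⁻¹ := iSup_le key
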